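/- Suppose A and G are n×n real matrices and there exists an invertible X with ‖X⁻¹ A G X − diag(I_r, 0)‖₂ = ε < 1, where r = rank(A). Then range(A G) = range(A). -/

import Mathlib

open scoped Matrix.Norms.L2Operator

/-- The n×n block diagonal matrix diag(I_r, 0). -/
def diagIr (n r : ℕ) : Matrix (Fin n) (Fin n) ℝ :=
  Matrix.of fun i j => if i = j ∧ (i : ℕ) < r then (1 : ℝ) else 0

set_option maxHeartbeats 1000000 in
/-- If G is an ε-accurate approximate generalized inverse of A (ε < 1),
then range(A G) = range(A). -/
theorem stmt11 {n : ℕ} (A G X : Matrix (Fin n) (Fin n) ℝ) (ε : ℝ) (hX : IsUnit X)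
    (hε : ‖X⁻¹ * (A * G) * X - diagIr n A.rank‖ = ε) (hε1 : ε < 1) :
    LinearMap.range (A * G).mulVecLin = LinearMap.range A.mulVecLin := by
  set r := A.rank with hr
  have hrn : r ≤ n := by simpa using A.rank_le_card_width
  set M := X⁻¹ * (A * G) * X with hM
  have hXdet : IsUnit X.det := (Matrix.isUnit_iff_isUnit_det X).mp hX
  have hXinvdet : IsUnit X⁻¹.det := X.isUnit_nonsing_inv_det hXdet
  have hrankM : M.rank = (A * G).rank := by
    rw [hM, Matrix.rank_mul_eq_left_of_isUnit_det _ _ hXdet,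
      Matrix.rank_mul_eq_right_of_isUnit_det _ _ hXinvdet]
  -- the span of the first r standard basis vectors
  have li : LinearIndependent ℝ
      (fun i : Fin r => (Pi.single (Fin.castLE hrn i) (1 : ℝ) : Fin n → ℝ)) := by
    have h := (Pi.basisFun ℝ (Fin n)).linearIndependent.comp (Fin.castLE hrn)
      (Fin.castLE_injective hrn)
    convert h using 2 with i
    simp [Pi.basisFun_apply]
  set V : Submodule ℝ (Fin n → ℝ) :=
    Submodule.span ℝ (Set.range fun i : Fin r =>
      (Pi.single (Fin.castLE hrn i) (1 : ℝ) : Fin n → ℝ)) with hV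
  have hVfin : Module.finrank ℝ V = r := by
    rw [hV, finrank_span_eq_card li, Fintype.card_fin]
  have hVzero : ∀ v ∈ V, ∀ j : Fin n, r ≤ (j : ℕ) → v j = 0 := by
    intro v hv
    induction hv using Submodule.span_induction with
    | mem x h =>
      obtain ⟨i, rfl⟩ := h
      intro j hj
      apply Pi.single_eq_of_ne
      intro hji
      rw [hji, Fin.coe_castLE] at hj
      exact absurd i.is_lt (by omega)
    | zero => intro j _; rfl
    | add x y hx hy ihx ihy => intro j hj; simp [ihx j hj, ihy j hj]
    | smul c x hx ih => intro j hj; simp [ih j hj]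
  have hD : ∀ v ∈ V, (diagIr n r).mulVec v = v := by
    intro v hv
    funext i
    rw [Matrix.mulVec, dotProduct]
    by_cases hi : (i : ℕ) < r
    · rw [Finset.sum_eq_single i]
      · simp [diagIr, hi]
      · intro b _ hb
        simp [diagIr, hb.symm]
      · simp
    · rw [hVzero v hv i (not_lt.mp hi)]
      apply Finset.sum_eq_zero
      intro b _
      rcases eq_or_ne i b with rfl | hb
      · simp [diagIr, hi]
      · simp [diagIr, hb]
  -- M is injective on V
  have hinj : ∀ v ∈ V, M.mulVec v = 0 → v = 0 := by
    intro v hv hMv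
    by_contra hv0
    have h1 : (M - diagIr n r).mulVec v = -v := by
      rw [Matrix.sub_mulVec, hMv, hD v hv, zero_sub]
    set w : EuclideanSpace ℝ (Fin n) := WithLp.toLp 2 v with hw
    have h2 := Matrix.l2_opNorm_mulVec (M - diagIr n r) w
    have h3 : ‖(EuclideanSpace.equiv (Fin n) ℝ).symm ((M - diagIr n r).mulVec w)‖ = ‖w‖ := by
      have : (M - diagIr n r).mulVec w = -v := h1
      rw [this]
      show ‖(-w : EuclideanSpace ℝ (Fin n))‖ = ‖w‖
      exact norm_neg w
    rw [h3, hε] at h2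
    have hwpos : 0 < ‖w‖ := norm_pos_iff.mpr (fun h => hv0 (congrArg WithLp.ofLp h))
    nlinarith
  -- rank M ≥ r via the restriction of M to V
  have hrle : r ≤ M.rank := by
    have hker : LinearMap.ker (M.mulVecLin.domRestrict V) = ⊥ := by
      rw [LinearMap.ker_eq_bot']
      rintro ⟨v, hv⟩ h
      exact Subtype.ext (hinj v hv h)
    have h4 := LinearMap.finrank_range_add_finrank_ker (M.mulVecLin.domRestrict V)
    rw [hker, finrank_bot, add_zero, hVfin] at h4
    calc r = Module.finrank ℝ (LinearMap.range (M.mulVecLin.domRestrict V)) := h4.symm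
      _ ≤ M.rank := Submodule.finrank_mono (by
        rintro x ⟨⟨v, hv⟩, rfl⟩
        exact ⟨v, rfl⟩)
  have hle : LinearMap.range (A * G).mulVecLin ≤ LinearMap.range A.mulVecLin := by
    rw [Matrix.mulVecLin_mul]
    exact LinearMap.range_comp_le_range _ _
  refine Submodule.eq_of_le_of_finrank_le hle ?_
  show A.rank ≤ (A * G).rank
  rw [← hrankM]
  exact hrle
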